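/- Let ν > 4 be finite and φ > 0, and let (y_i)_{i≥1} be an i.i.d. sequence of real random variables, each distributed according to the t-distribution t(0, φ, ν), i.e. the measure on ℝ with Lebesgue density f(x) = Γ((ν+1)/2) / (Γ(ν/2) √(π ν φ)) · (1 + x²/(ν φ))^{−(ν+1)/2}. For each n ≥ 1 let ȳ_n = (1/n)∑_{i=1}^n y_i and let Z_n = [(1/n)∑_{i=1}^n (y_i − ȳ_n)⁴] / [(1/n)∑_{i=1}^n (y_i − ȳ_n)²]² be the sample kurtosis. Then the sequence √n (Z_n − 3) diverges almost surely; more precisely, almost surely √n (Z_n − 3) → +∞ as n → ∞ (since Z_n converges almost surely to 3(ν − 2)/(ν − 4) > 3). -/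

import Mathlib

open MeasureTheory ProbabilityTheory Filter Real Topology
open scoped ENNReal NNReal

lemma upos (c : ℝ) (hc : 0 < c) (x : ℝ) : 0 < 1 + x^2/c := by positivity

lemma aux_bound {c q : ℝ} (hc : 0 < c) (hq : 0 ≤ q) (k : ℕ) (x : ℝ) :
    |x ^ k * (1 + x^2/c) ^ (-q)| ≤ (2 * max 1 c) ^ q * (1 + |x|) ^ ((k:ℝ) - 2*q) := by
  have h1 : (0:ℝ) < 1 + |x| := by positivity
  have hM : (0:ℝ) < 2 * max 1 c := by positivity
  have hu := upos c hc x
  have key : (1 + |x|)^2 / (2 * max 1 c) ≤ 1 + x^2/c := by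
    rw [div_le_iff₀ hM]
    have h2 : x^2/c * c = x^2 := div_mul_cancel₀ _ (ne_of_gt hc)
    have h3 : (max 1 c - c) * (x^2/c) ≥ 0 := by
      have : 0 ≤ x^2/c := by positivity
      nlinarith [le_max_right 1 c]
    nlinarith [sq_nonneg (1 - |x|), le_max_left 1 c, sq_abs x]
  have hb : (1 + x^2/c) ^ (-q) ≤ ((1 + |x|)^2 / (2 * max 1 c)) ^ (-q) :=
    Real.rpow_le_rpow_of_nonpos (by positivity) key (neg_nonpos.2 hq)
  have habs : |x ^ k * (1 + x^2/c) ^ (-q)| = |x| ^ k * (1 + x^2/c) ^ (-q) := by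
    rw [abs_mul, abs_pow, abs_of_pos (Real.rpow_pos_of_pos hu _)]
  rw [habs]
  have step1 : |x| ^ k * (1 + x^2/c) ^ (-q) ≤ (1 + |x|) ^ k * ((1 + |x|)^2 / (2 * max 1 c)) ^ (-q) := by
    apply mul_le_mul (pow_le_pow_left₀ (abs_nonneg x) (by linarith) k) hb
      (le_of_lt (Real.rpow_pos_of_pos hu _)) (by positivity)
  refine step1.trans (le_of_eq ?_)
  rw [Real.div_rpow (by positivity) hM.le, Real.rpow_neg hM.le, div_inv_eq_mul]
  rw [← Real.rpow_natCast (1+|x|) 2, ← Real.rpow_mul h1.le, ← Real.rpow_natCast (1+|x|) k]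
  rw [show (1+|x|) ^ (k:ℝ) * ((1+|x|) ^ ((2:ℕ) * (-q)) * (2 * max 1 c) ^ q)
      = (2 * max 1 c) ^ q * ((1+|x|) ^ (k:ℝ) * (1+|x|) ^ ((2:ℕ) * (-q))) by ring,
    ← Real.rpow_add h1]
  norm_num
  ring_nf
  exact Or.inl trivial

lemma aux_cont {c : ℝ} (hc : 0 < c) (q : ℝ) (k : ℕ) :
    Continuous fun x : ℝ => x ^ k * (1 + x^2/c) ^ (-q) := by
  refine (continuous_pow k).mul (Continuous.rpow_const (by continuity) ?_)
  exact fun x => Or.inl (ne_of_gt (upos c hc x))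

lemma aux_integrable {c q : ℝ} (hc : 0 < c) (hq : 0 ≤ q) (k : ℕ) (hk : (k:ℝ) < 2*q - 1) :
    Integrable fun x : ℝ => x ^ k * (1 + x^2/c) ^ (-q) := by
  have h1 : (Module.finrank ℝ ℝ : ℝ) < 2*q - k := by
    rw [Module.finrank_self]; push_cast; linarith
  have hint : Integrable fun x : ℝ => (2 * max 1 c) ^ q * (1 + ‖x‖) ^ (-(2*q - (k:ℝ))) :=
    (integrable_one_add_norm h1).const_mul _
  refine hint.mono' (aux_cont hc q k).aestronglyMeasurable (Filter.Eventually.of_forall fun x => ?_)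
  simp only [Real.norm_eq_abs]
  have := aux_bound hc hq k x
  rw [show -(2*q - (k:ℝ)) = (k:ℝ) - 2*q by ring]
  exact this

lemma aux_tendsto_top {c q : ℝ} (hc : 0 < c) (hq : 0 ≤ q) (k : ℕ) (hk : (k:ℝ) < 2*q) :
    Tendsto (fun x : ℝ => x ^ k * (1 + x^2/c) ^ (-q)) atTop (𝓝 0) := by
  have hg : Tendsto (fun x : ℝ => (2 * max 1 c) ^ q * (1 + |x|) ^ ((k:ℝ) - 2*q)) atTop (𝓝 ((2 * max 1 c) ^ q * 0)) := by
    refine Tendsto.const_mul _ ?_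
    have h1 : Tendsto (fun x : ℝ => 1 + |x|) atTop atTop :=
      tendsto_atTop_add_const_left _ _ tendsto_abs_atTop_atTop
    have h2 := (tendsto_rpow_neg_atTop (y := 2*q - k) (by linarith)).comp h1
    simpa [Function.comp_def, show -(2*q - (k:ℝ)) = (k:ℝ) - 2*q by ring] using h2
  rw [mul_zero] at hg
  exact squeeze_zero_norm (fun x => by rw [Real.norm_eq_abs]; exact aux_bound hc hq k x) hg

lemma aux_tendsto_bot {c q : ℝ} (hc : 0 < c) (hq : 0 ≤ q) (k : ℕ) (hk : (k:ℝ) < 2*q) :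
    Tendsto (fun x : ℝ => x ^ k * (1 + x^2/c) ^ (-q)) atBot (𝓝 0) := by
  have hg : Tendsto (fun x : ℝ => (2 * max 1 c) ^ q * (1 + |x|) ^ ((k:ℝ) - 2*q)) atBot (𝓝 ((2 * max 1 c) ^ q * 0)) := by
    refine Tendsto.const_mul _ ?_
    have h1 : Tendsto (fun x : ℝ => 1 + |x|) atBot atTop :=
      tendsto_atTop_add_const_left _ _ tendsto_abs_atBot_atTop
    have h2 := (tendsto_rpow_neg_atTop (y := 2*q - k) (by linarith)).comp h1
    simpa [Function.comp_def, show -(2*q - (k:ℝ)) = (k:ℝ) - 2*q by ring] using h2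
  rw [mul_zero] at hg
  exact squeeze_zero_norm (fun x => by rw [Real.norm_eq_abs]; exact aux_bound hc hq k x) hg

lemma aux_deriv {c q : ℝ} (hc : 0 < c) (k : ℕ) (x : ℝ) :
    HasDerivAt (fun x : ℝ => x ^ (k+1) * (1 + x^2/c) ^ (-q))
      (((k:ℝ)+1) * (x ^ k * (1 + x^2/c) ^ (-q))
        - (2*q/c) * (x ^ (k+2) * (1 + x^2/c) ^ (-(q+1)))) x := by
  have hu : HasDerivAt (fun x : ℝ => 1 + x^2/c) (2*x/c) x := by
    have := ((hasDerivAt_pow 2 x).div_const c).const_add 1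
    simpa using this
  have h2 : HasDerivAt (fun x : ℝ => (1 + x^2/c) ^ (-q))
      (2*x/c * (-q) * (1 + x^2/c) ^ (-q-1)) x :=
    hu.rpow_const (Or.inl (ne_of_gt (upos c hc x)))
  have h3 := (hasDerivAt_pow (k+1) x).mul h2
  refine h3.congr_deriv ?_
  rw [show -q-1 = -(q+1) by ring]
  push_cast
  ring
lemma aux_ibp {c q : ℝ} (hc : 0 < c) (hq : 0 ≤ q) (k : ℕ) (hk : (k:ℝ) < 2*q - 1) :
    ((k:ℝ)+1) * ∫ x : ℝ, x ^ k * (1 + x^2/c) ^ (-q)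
      = (2*q/c) * ∫ x : ℝ, x ^ (k+2) * (1 + x^2/c) ^ (-(q+1)) := by
  have hi1 := aux_integrable hc hq k hk
  have hi2 : Integrable fun x : ℝ => x ^ (k+2) * (1 + x^2/c) ^ (-(q+1)) :=
    aux_integrable hc (by linarith) (k+2) (by push_cast; linarith)
  have h0 : (∫ x : ℝ, (((k:ℝ)+1) * (x ^ k * (1 + x^2/c) ^ (-q))
      - (2*q/c) * (x ^ (k+2) * (1 + x^2/c) ^ (-(q+1))))) = 0 - 0 :=
    integral_of_hasDerivAt_of_tendsto (fun x => aux_deriv hc k x)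
      ((hi1.const_mul _).sub (hi2.const_mul _))
      (aux_tendsto_bot hc hq (k+1) (by push_cast; linarith))
      (aux_tendsto_top hc hq (k+1) (by push_cast; linarith))
  rw [integral_sub (hi1.const_mul _) (hi2.const_mul _),
    integral_const_mul, integral_const_mul] at h0
  linarith

lemma aux_split {c q : ℝ} (hc : 0 < c) (hq : 0 ≤ q) (k : ℕ) (hk : (k:ℝ) < 2*q - 1) :
    (∫ x : ℝ, x ^ (k+2) * (1 + x^2/c) ^ (-(q+1)))
      = c * ((∫ x : ℝ, x ^ k * (1 + x^2/c) ^ (-q))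
          - ∫ x : ℝ, x ^ k * (1 + x^2/c) ^ (-(q+1))) := by
  have hpt : ∀ x : ℝ, x ^ (k+2) * (1 + x^2/c) ^ (-(q+1))
      = c * (x ^ k * (1 + x^2/c) ^ (-q) - x ^ k * (1 + x^2/c) ^ (-(q+1))) := by
    intro x
    have hu := upos c hc x
    have h1 : (1 + x^2/c) * (1 + x^2/c) ^ (-(q+1)) = (1 + x^2/c) ^ (-q) := by
      rw [show (-q) = 1 + -(q+1) by ring, Real.rpow_add hu, Real.rpow_one]
    have hx2 : x^2 = c * (1 + x^2/c) - c := by field_simp; ring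
    calc x ^ (k+2) * (1 + x^2/c) ^ (-(q+1))
        = x ^ k * (x^2 * (1 + x^2/c) ^ (-(q+1))) := by ring
      _ = x ^ k * ((c * (1 + x^2/c) - c) * (1 + x^2/c) ^ (-(q+1))) := by rw [← hx2]
      _ = c * (x ^ k * ((1 + x^2/c) * (1 + x^2/c) ^ (-(q+1)))) - c * (x ^ k * (1 + x^2/c) ^ (-(q+1))) := by ring
      _ = c * (x ^ k * (1 + x^2/c) ^ (-q)) - c * (x ^ k * (1 + x^2/c) ^ (-(q+1))) := by rw [h1]
      _ = c * (x ^ k * (1 + x^2/c) ^ (-q) - x ^ k * (1 + x^2/c) ^ (-(q+1))) := by ring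
  rw [show (fun x : ℝ => x ^ (k+2) * (1 + x^2/c) ^ (-(q+1))) = fun x : ℝ =>
      c * (x ^ k * (1 + x^2/c) ^ (-q) - x ^ k * (1 + x^2/c) ^ (-(q+1))) from funext hpt,
    integral_const_mul,
    integral_sub (aux_integrable hc hq k hk) (aux_integrable hc (by linarith) k (by linarith))]

lemma aux_odd {c q : ℝ} (k : ℕ) (hk : Odd k) :
    (∫ x : ℝ, x ^ k * (1 + x^2/c) ^ (-q)) = 0 := by
  have A : MeasurableEmbedding fun x : ℝ => -x :=
    (Homeomorph.neg ℝ).measurableEmbedding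
  have h : (∫ x : ℝ, x ^ k * (1 + x^2/c) ^ (-q))
      = ∫ x : ℝ, (-x) ^ k * (1 + (-x)^2/c) ^ (-q) := by
    conv_lhs => rw [← Measure.map_neg_eq_self (volume : Measure ℝ)]
    exact A.integral_map _
  simp only [hk.neg_pow, neg_sq, neg_mul] at h
  rw [integral_neg] at h
  linarith

lemma moments_key {ν c : ℝ} (hν : 4 < ν) (hc : 0 < c) :
    ((∫ x : ℝ, x ^ 2 * (1+x^2/c) ^ (-((ν+1)/2)))
        = c/(ν-2) * ∫ x : ℝ, (1+x^2/c) ^ (-((ν+1)/2))) ∧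
    ((∫ x : ℝ, x ^ 4 * (1+x^2/c) ^ (-((ν+1)/2)))
        = 3*c^2/((ν-2)*(ν-4)) * ∫ x : ℝ, (1+x^2/c) ^ (-((ν+1)/2))) := by
  have hc' : c ≠ 0 := ne_of_gt hc
  have hν1 : ν - 1 ≠ 0 := by linarith
  have hν2 : ν - 2 ≠ 0 := by linarith
  have hν4 : ν - 4 ≠ 0 := by linarith
  set J0 := ∫ x : ℝ, (1+x^2/c) ^ (-((ν+1)/2)) with hJ0
  set J2 := ∫ x : ℝ, x ^ 2 * (1+x^2/c) ^ (-((ν+1)/2)) with hJ2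
  set J4 := ∫ x : ℝ, x ^ 4 * (1+x^2/c) ^ (-((ν+1)/2)) with hJ4
  set A := ∫ x : ℝ, (1+x^2/c) ^ (-((ν-1)/2)) with hA
  set A2 := ∫ x : ℝ, (1+x^2/c) ^ (-((ν-3)/2)) with hA2
  set B := ∫ x : ℝ, x ^ 2 * (1+x^2/c) ^ (-((ν-1)/2)) with hB
  have e1 := aux_ibp (q := (ν-1)/2) hc (by linarith) 0 (by norm_num; linarith)
  have e2 := aux_split (q := (ν-1)/2) hc (by linarith) 0 (by norm_num; linarith)
  have e3 := aux_ibp (q := (ν-3)/2) hc (by linarith) 0 (by norm_num; linarith)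
  have e4 := aux_split (q := (ν-3)/2) hc (by linarith) 0 (by norm_num; linarith)
  have e5 := aux_ibp (q := (ν-1)/2) hc (by linarith) 2 (by norm_num; linarith)
  simp only [pow_zero, one_mul, Nat.zero_add, Nat.cast_zero, Nat.cast_ofNat,
    show -((ν-1)/2 + 1) = -((ν+1)/2) from by ring,
    show -((ν-3)/2 + 1) = -((ν-1)/2) from by ring] at e1 e2 e3 e4 e5
  norm_num at e1 e2 e3 e4 e5
  -- e1 : A = (2*((ν-1)/2)/c) * J2  etc.
  simp only [← hJ0, ← hJ2, ← hJ4, ← hA, ← hA2, ← hB] at e1 e2 e3 e4 e5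
  have f1 : c * A = (ν-1) * J2 := by rw [e1]; field_simp
  have f3 : c * A2 = (ν-3) * B := by rw [e3]; field_simp
  have f5 : 3 * c * B = (ν-1) * J4 := by
    have : c * (3 * B) = c * (2 * ((ν - 1) / 2) / c * J4) := by rw [e5]
    field_simp at this; linarith
  have g1 : (ν-4) * B = c * A := by linear_combination (-1)*e4 - f3
  have g2 : (ν-2) * J2 = c * J0 := by linear_combination (-1)*e2 - f1
  have g3 : c*(ν-2)*A = (ν-1)*c*J0 := by linear_combination (ν-2)*f1 + (ν-1)*g2
  have key : c*(ν-1) * ((ν-2)*(ν-4)*J4 - 3*c^2*J0) = 0 := by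
    linear_combination (-c*(ν-2)*(ν-4))*f5 + (3*c^2*(ν-2))*g1 + (3*c^2)*g3
  have key2 : (ν-2)*(ν-4)*J4 - 3*c^2*J0 = 0 := by
    rcases mul_eq_zero.mp key with h | h
    · exact absurd h (mul_ne_zero hc' hν1)
    · exact h
  constructor
  · rw [div_mul_eq_mul_div, eq_div_iff hν2]; linear_combination g2
  · rw [div_mul_eq_mul_div, eq_div_iff (mul_ne_zero hν2 hν4)]; linear_combination key2

/-- The `t`-distribution `t(0, φ, ν)`: the measure on `ℝ` with Lebesgue density
`Γ((ν+1)/2) / (Γ(ν/2) √(π ν φ)) · (1 + x²/(ν φ))^{-(ν+1)/2}`. -/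
noncomputable def tMeasure (φ ν : ℝ) : Measure ℝ :=
  volume.withDensity fun x => ENNReal.ofReal
    (Real.Gamma ((ν + 1) / 2) / (Real.Gamma (ν / 2) * Real.sqrt (Real.pi * ν * φ)) *
      (1 + x ^ 2 / (ν * φ)) ^ (-((ν + 1) / 2)))

lemma tMeasure_integral {ν φ : ℝ} (hν : 4 < ν) (hφ : 0 < φ) (k : ℕ) (hk : (k:ℝ) < ν) :
    Integrable (fun x : ℝ => x ^ k) (tMeasure φ ν) ∧
    (∫ x, x ^ k ∂(tMeasure φ ν))
      = (Real.Gamma ((ν+1)/2) / (Real.Gamma (ν/2) * Real.sqrt (Real.pi * ν * φ)))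
          * ∫ x : ℝ, x ^ k * (1 + x^2/(ν*φ)) ^ (-((ν+1)/2)) := by
  have hc : 0 < ν * φ := by positivity
  set K := Real.Gamma ((ν+1)/2) / (Real.Gamma (ν/2) * Real.sqrt (Real.pi * ν * φ)) with hK
  have hKpos : 0 < K := by
    rw [hK]
    have h1 : 0 < Real.Gamma ((ν+1)/2) := Real.Gamma_pos_of_pos (by linarith)
    have h2 : 0 < Real.Gamma (ν/2) := Real.Gamma_pos_of_pos (by linarith)
    have h3 : 0 < Real.sqrt (Real.pi * ν * φ) := Real.sqrt_pos.2 (by positivity)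
    positivity
  set g : ℝ → ℝ := fun x => K * (1 + x^2/(ν*φ)) ^ (-((ν+1)/2)) with hg
  have hg0 : ∀ x, 0 ≤ g x := fun x =>
    mul_nonneg hKpos.le (Real.rpow_pos_of_pos (upos _ hc x) _).le
  have hgc : Continuous g := by
    have : Continuous fun x : ℝ => K * (x ^ 0 * (1 + x^2/(ν*φ)) ^ (-((ν+1)/2))) :=
      continuous_const.mul (aux_cont hc _ 0)
    simpa [pow_zero] using this
  have hmeas : Measurable fun x => (g x).toNNReal := hgc.measurable.real_toNNReal
  have hrw : tMeasure φ ν = volume.withDensity fun x => ((g x).toNNReal : ℝ≥0∞) := rfl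
  have hint : Integrable (fun x : ℝ => x ^ k * (1 + x^2/(ν*φ)) ^ (-((ν+1)/2))) volume :=
    aux_integrable hc (by linarith) k (by linarith)
  have heq : (fun x : ℝ => ((g x).toNNReal : ℝ) • x ^ k)
      = fun x : ℝ => K * (x ^ k * (1 + x^2/(ν*φ)) ^ (-((ν+1)/2))) := by
    funext x
    rw [Real.coe_toNNReal _ (hg0 x), smul_eq_mul, hg]
    ring
  constructor
  · rw [hrw, integrable_withDensity_iff_integrable_coe_smul hmeas]
    rw [heq]
    exact hint.const_mul K
  · rw [hrw, integral_withDensity_eq_integral_smul hmeas]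
    simp only [NNReal.smul_def]
    rw [heq, integral_const_mul]

/-- For an i.i.d. sequence from `t(0, φ, ν)` with finite `ν > 4`, the sequence `√n (Z_n - 3)`
built from the sample kurtosis `Z_n` diverges almost surely to `+∞`. -/
theorem t_sample_kurtosis_statistic_ae_diverges
    {Ω : Type*} [MeasurableSpace Ω] (P : Measure Ω) [IsProbabilityMeasure P]
    (ν φ : ℝ) (hν : 4 < ν) (hφ : 0 < φ)
    (y : ℕ → Ω → ℝ)
    (hmeas : ∀ i, Measurable (y i))
    (hindep : iIndepFun y P)
    (hdist : ∀ i, P.map (y i) = tMeasure φ ν)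
    (ybar : ℕ → Ω → ℝ)
    (hybar : ∀ n ω, ybar n ω = (∑ i ∈ Finset.range n, y i ω) / n)
    (Z : ℕ → Ω → ℝ)
    (hZ : ∀ n ω, Z n ω =
      ((∑ i ∈ Finset.range n, (y i ω - ybar n ω) ^ 4) / n) /
        ((∑ i ∈ Finset.range n, (y i ω - ybar n ω) ^ 2) / n) ^ 2) :
    ∀ᵐ ω ∂P, Tendsto (fun n : ℕ => Real.sqrt n * (Z n ω - 3)) atTop atTop := by
  have hc : 0 < ν * φ := by positivity
  have hν2 : ν - 2 ≠ 0 := by intro h; linarith [(by linarith : (0:ℝ) < ν - 2)]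
  have hν4 : ν - 4 ≠ 0 := by intro h; linarith [(by linarith : (0:ℝ) < ν - 4)]
  -- normalization
  have hnorm : (Real.Gamma ((ν+1)/2) / (Real.Gamma (ν/2) * Real.sqrt (Real.pi * ν * φ)))
      * (∫ x : ℝ, (1 + x^2/(ν*φ)) ^ (-((ν+1)/2))) = 1 := by
    have h0 := (tMeasure_integral hν hφ 0 (by norm_num; linarith)).2
    simp only [pow_zero, one_mul] at h0
    have hone : ∫ x, (1:ℝ) ∂(tMeasure φ ν) = 1 := by
      have : IsProbabilityMeasure (tMeasure φ ν) := by
        rw [← hdist 0]; exact Measure.isProbabilityMeasure_map (hmeas 0).aemeasurable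
      simp
    rw [← h0, hone]
  -- values of the moments
  obtain ⟨hJ2, hJ4⟩ := moments_key hν hc
  have hm1 : (∫ x, x ^ 1 ∂(tMeasure φ ν)) = 0 := by
    rw [(tMeasure_integral hν hφ 1 (by push_cast; linarith)).2, aux_odd 1 odd_one, mul_zero]
  have hm3 : (∫ x, x ^ 3 ∂(tMeasure φ ν)) = 0 := by
    rw [(tMeasure_integral hν hφ 3 (by push_cast; linarith)).2, aux_odd 3 (by decide), mul_zero]
  have hm2 : (∫ x, x ^ 2 ∂(tMeasure φ ν)) = (ν*φ)/(ν-2) := by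
    rw [(tMeasure_integral hν hφ 2 (by push_cast; linarith)).2, hJ2, ← mul_assoc,
      mul_comm (Real.Gamma ((ν+1)/2) / _) ((ν*φ)/(ν-2)), mul_assoc, hnorm, mul_one]
  have hm4 : (∫ x, x ^ 4 ∂(tMeasure φ ν)) = 3*(ν*φ)^2/((ν-2)*(ν-4)) := by
    rw [(tMeasure_integral hν hφ 4 (by push_cast; linarith)).2, hJ4, ← mul_assoc,
      mul_comm (Real.Gamma ((ν+1)/2) / _) (3*(ν*φ)^2/((ν-2)*(ν-4))), mul_assoc, hnorm, mul_one]
  -- strong law of large numbers for powers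
  have slln : ∀ k : ℕ, (k:ℝ) < ν → ∀ᵐ ω ∂P,
      Tendsto (fun n : ℕ => (∑ i ∈ Finset.range n, (y i ω) ^ k) / n) atTop
        (𝓝 (∫ x, x ^ k ∂(tMeasure φ ν))) := by
    intro k hkν
    have hxk : Measurable fun x : ℝ => x ^ k := measurable_id.pow_const k
    have hident : ∀ i, IdentDistrib (fun ω => (y i ω) ^ k) (fun ω => (y 0 ω) ^ k) P P := by
      intro i
      have base : IdentDistrib (y i) (y 0) P P :=
        ⟨(hmeas i).aemeasurable, (hmeas 0).aemeasurable, by rw [hdist i, hdist 0]⟩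
      exact base.comp hxk
    have hpair : Pairwise (Function.onFun (IndepFun · · P) fun i ω => (y i ω) ^ k) := by
      intro i j hij
      exact (hindep.indepFun hij).comp hxk hxk
    have hintk : Integrable (fun ω => (y 0 ω) ^ k) P := by
      have h := (tMeasure_integral hν hφ k hkν).1
      rw [← hdist 0] at h
      exact (integrable_map_measure hxk.aestronglyMeasurable (hmeas 0).aemeasurable).mp h
    have hlim : P[fun ω => (y 0 ω) ^ k] = ∫ x, x ^ k ∂(tMeasure φ ν) := by
      rw [← hdist 0, integral_map (hmeas 0).aemeasurable hxk.aestronglyMeasurable]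
    have h := strong_law_ae_real _ hintk hpair hident
    rw [hlim] at h
    exact h
  have s1 := slln 1 (by push_cast; linarith)
  have s2 := slln 2 (by push_cast; linarith)
  have s3 := slln 3 (by push_cast; linarith)
  have s4 := slln 4 (by push_cast; linarith)
  rw [hm1] at s1; rw [hm2] at s2; rw [hm3] at s3; rw [hm4] at s4
  filter_upwards [s1, s2, s3, s4] with ω T1 T2 T3 T4
  set m2 : ℝ := (ν*φ)/(ν-2) with hm2v
  set m4 : ℝ := 3*(ν*φ)^2/((ν-2)*(ν-4)) with hm4v
  have hm2pos : 0 < m2 := by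
    rw [hm2v]; apply div_pos hc; linarith
  set M : ℕ → ℕ → ℝ := fun k n => (∑ i ∈ Finset.range n, (y i ω) ^ k) / n with hM
  -- denominator
  have hden : Tendsto (fun n : ℕ => (∑ i ∈ Finset.range n, (y i ω - ybar n ω) ^ 2) / n)
      atTop (𝓝 m2) := by
    have hrhs : Tendsto (fun n : ℕ => M 2 n - 2 * M 1 n * M 1 n + (M 1 n) ^ 2) atTop
        (𝓝 (m2 - 2 * 0 * 0 + 0 ^ 2)) :=
      ((T2.sub ((T1.const_mul 2).mul T1)).add (T1.pow 2))
    have : m2 - 2 * 0 * 0 + 0 ^ 2 = m2 := by ring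
    rw [this] at hrhs
    refine Tendsto.congr' ?_ hrhs
    filter_upwards [eventually_ge_atTop 1] with n hn
    have hn0 : (n:ℝ) ≠ 0 := Nat.cast_ne_zero.2 (by omega)
    have hexp : ∑ i ∈ Finset.range n, (y i ω - ybar n ω) ^ 2
        = (∑ i ∈ Finset.range n, (y i ω) ^ 2)
          - 2 * ybar n ω * (∑ i ∈ Finset.range n, y i ω) + n * (ybar n ω) ^ 2 := by
      have : ∀ i ∈ Finset.range n, (y i ω - ybar n ω) ^ 2
          = (y i ω) ^ 2 - 2 * ybar n ω * y i ω + (ybar n ω) ^ 2 := fun i _ => by ring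
      rw [Finset.sum_congr rfl this]
      simp [Finset.sum_add_distrib, Finset.sum_sub_distrib, ← Finset.mul_sum, Finset.sum_const,
        Finset.card_range, nsmul_eq_mul]
    have hy : ybar n ω = M 1 n := by rw [hybar, hM]; simp
    rw [← hy, hM]
    simp only
    rw [hexp, hybar]
    field_simp
  have hnum : Tendsto (fun n : ℕ => (∑ i ∈ Finset.range n, (y i ω - ybar n ω) ^ 4) / n)
      atTop (𝓝 m4) := by
    have hrhs : Tendsto (fun n : ℕ => M 4 n - 4 * M 1 n * M 3 n + 6 * (M 1 n)^2 * M 2 n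
        - 4 * (M 1 n)^3 * M 1 n + (M 1 n)^4) atTop
        (𝓝 (m4 - 4 * 0 * 0 + 6 * 0^2 * m2 - 4 * 0^3 * 0 + 0^4)) :=
      ((((T4.sub ((T1.const_mul 4).mul T3)).add (((T1.pow 2).const_mul 6).mul T2)).sub
        (((T1.pow 3).const_mul 4).mul T1)).add (T1.pow 4))
    have heq : m4 - 4 * 0 * 0 + 6 * 0^2 * m2 - 4*0^3*0 + 0^4 = m4 := by ring
    rw [heq] at hrhs
    refine Tendsto.congr' ?_ hrhs
    filter_upwards [eventually_ge_atTop 1] with n hn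
    have hn0 : (n:ℝ) ≠ 0 := Nat.cast_ne_zero.2 (by omega)
    have hexp : ∑ i ∈ Finset.range n, (y i ω - ybar n ω) ^ 4
        = (∑ i ∈ Finset.range n, (y i ω)^4)
          - 4 * ybar n ω * (∑ i ∈ Finset.range n, (y i ω)^3)
          + 6 * (ybar n ω)^2 * (∑ i ∈ Finset.range n, (y i ω)^2)
          - 4 * (ybar n ω)^3 * (∑ i ∈ Finset.range n, y i ω)
          + n * (ybar n ω)^4 := by
      have h4 : ∀ i ∈ Finset.range n, (y i ω - ybar n ω)^4
          = (y i ω)^4 - 4*ybar n ω*(y i ω)^3 + 6*(ybar n ω)^2*(y i ω)^2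
            - 4*(ybar n ω)^3*(y i ω) + (ybar n ω)^4 := fun i _ => by ring
      rw [Finset.sum_congr rfl h4]
      simp [Finset.sum_add_distrib, Finset.sum_sub_distrib, ← Finset.mul_sum, Finset.sum_const,
        Finset.card_range, nsmul_eq_mul]
    have hy : ybar n ω = M 1 n := by rw [hybar, hM]; simp
    rw [← hy, hM]
    simp only
    rw [hexp, hybar]
    field_simp
  have hZt : Tendsto (fun n : ℕ => Z n ω) atTop (𝓝 (m4 / m2 ^ 2)) := by
    have h := hnum.div (hden.pow 2) (by positivity)
    exact Tendsto.congr (fun n => (hZ n ω).symm) h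
  have hL : 3 < m4 / m2 ^ 2 := by
    have hval : m4 / m2 ^ 2 = 3 * (ν - 2) / (ν - 4) := by
      rw [hm4v, hm2v]
      field_simp
    rw [hval, lt_div_iff₀ (by linarith : (0:ℝ) < ν - 4)]
    linarith
  have hsqrt : Tendsto (fun n : ℕ => Real.sqrt n) atTop atTop := by
    have h1 : Tendsto (fun x : ℝ => x ^ (1/2 : ℝ)) atTop atTop :=
      tendsto_rpow_atTop (by norm_num)
    have h2 : Tendsto (fun n : ℕ => (n:ℝ)) atTop atTop := tendsto_natCast_atTop_atTop
    exact Tendsto.congr (fun n => (Real.sqrt_eq_rpow _).symm) (h1.comp h2)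
  have hfin := Tendsto.atTop_mul_pos (sub_pos.2 hL) hsqrt (hZt.sub tendsto_const_nhds)
  exact hfin
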